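/- With the notation of the tensor product RKHS H(K)^{⊗d} (λ_k ≍ k^{−2α}) and the subspaces M, L as above: (i) ‖A − A ×_y P_L‖²_{L²} ≤ C d2 ℓ^{−2α} ‖A‖²_{H(K)^{⊗d}}; (ii) ‖A ×_y P_L − A ×_x P_M ×_y P_L‖²_{L²} ≤ C d1 m^{−2α} ‖A‖²_{H(K)^{⊗d}}. -/

import Mathlib

open MeasureTheory

/-- Lebesgue measure on `[0,1]`. -/
noncomputable def unitMeasure : Measure ℝ := volume.restrict (Set.Icc 0 1)

/-- The coefficient `A[φ_{k_1},…,φ_{k_d}]` of `A ∈ L²([0,1]^d)` against the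
product of one-dimensional basis functions. -/
noncomputable def tensorCoef (d : ℕ) (φ : ℕ → Lp ℝ 2 unitMeasure)
    (A : Lp ℝ 2 (Measure.pi fun _ : Fin d => unitMeasure)) (kv : Fin d → ℕ) : ℝ :=
  ∫ z, A z * ∏ j, (φ (kv j) : ℝ → ℝ) (z j) ∂(Measure.pi fun _ : Fin d => unitMeasure)

instance : IsProbabilityMeasure unitMeasure :=
  ⟨by simp [unitMeasure, Real.volume_Icc]⟩

namespace RKHSAux

open Function Set

theorem Integrable.fin_pi_prod {n : ℕ} {E : Fin n → Type*}
    [∀ i, MeasurableSpace (E i)] (μ : ∀ i, Measure (E i)) [∀ i, SigmaFinite (μ i)]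
    {f : ∀ i, E i → ℝ} (hf : ∀ i, Integrable (f i) (μ i)) :
    Integrable (fun x : ∀ i, E i => ∏ i, f i (x i)) (Measure.pi μ) := by
  induction n with
  | zero =>
      have : IsProbabilityMeasure (Measure.pi μ) := ⟨by rw [Measure.pi_univ]; simp⟩
      simp only [Finset.univ_eq_empty, Finset.prod_empty]
      exact integrable_const _
  | succ n n_ih =>
      have := ((measurePreserving_piFinSuccAbove μ 0).symm)
      rw [← this.integrable_comp_emb (MeasurableEquiv.measurableEmbedding _)]
      simp_rw [MeasurableEquiv.piFinSuccAbove_symm_apply, Fin.insertNthEquiv,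
        Fin.prod_univ_succ, Fin.insertNth_zero]
      simp only [Fin.zero_succAbove, Function.comp_def, Fin.cons_zero, Fin.cons_succ,
        Equiv.coe_fn_mk]
      have : Integrable (fun (x : (j : Fin n) → E (Fin.succ j)) ↦ ∏ j, f (Fin.succ j) (x j))
          (Measure.pi fun j => μ (Fin.succ j)) := n_ih _ (fun i ↦ hf _)
      exact Integrable.mul_prod (hf 0) this

theorem integral_fin_pi_prod {n : ℕ} {E : Fin n → Type*}
    [∀ i, MeasurableSpace (E i)] (μ : ∀ i, Measure (E i)) [∀ i, SigmaFinite (μ i)]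
    (f : ∀ i, E i → ℝ) :
    ∫ x : ∀ i, E i, ∏ i, f i (x i) ∂Measure.pi μ = ∏ i, ∫ x, f i x ∂μ i := by
  induction n with
  | zero =>
      have : (Measure.pi μ) Set.univ = 1 := by
        rw [Measure.pi_univ]; simp
      simp only [Finset.univ_eq_empty, Finset.prod_empty, integral_const, this,
        ENNReal.toReal_one, measureReal_def, smul_eq_mul, mul_one, one_smul]
  | succ n n_ih =>
      calc
        _ = ∫ x : E 0 × ((i : Fin n) → E (Fin.succ i)),
            f 0 x.1 * ∏ i : Fin n, f (Fin.succ i) (x.2 i) ∂((μ 0).prod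
              (Measure.pi fun j => μ (Fin.succ j))) := by
          rw [← ((measurePreserving_piFinSuccAbove μ 0).symm).integral_comp']
          simp_rw [MeasurableEquiv.piFinSuccAbove_symm_apply, Fin.insertNthEquiv,
            Fin.prod_univ_succ, Fin.insertNth_zero, Equiv.coe_fn_mk, Fin.cons_succ,
            Fin.cons_zero]
          rfl
        _ = (∫ x, f 0 x ∂μ 0) * ∏ i : Fin n, ∫ x : E (Fin.succ i), f (Fin.succ i) x
              ∂μ (Fin.succ i) := by
          rw [← n_ih _ _, ← integral_prod_mul]
        _ = ∏ i, ∫ x, f i x ∂μ i := by rw [Fin.prod_univ_succ]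

end RKHSAux

namespace RKHSAux

open Function Set

variable {d : ℕ}

local notation "πd" => Measure.pi fun _ : Fin d => unitMeasure

instance piProb : IsProbabilityMeasure (Measure.pi fun _ : Fin d => unitMeasure) :=
  ⟨by rw [Measure.pi_univ]; simp⟩

theorem qmp_eval (i : Fin d) :
    Measure.QuasiMeasurePreserving (fun z : Fin d → ℝ => z i) πd unitMeasure := by
  refine ⟨measurable_pi_apply i, Measure.AbsolutelyContinuous.mk fun s hs h0 => ?_⟩
  rw [Measure.map_apply (measurable_pi_apply i) hs]
  exact Measure.pi_eval_preimage_null _ h0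

theorem memℒp_tensor (g : Fin d → Lp ℝ 2 unitMeasure) :
    MemLp (fun z : Fin d → ℝ => ∏ i, (g i : ℝ → ℝ) (z i)) 2
      (Measure.pi fun _ : Fin d => unitMeasure) := by
  have hm : AEStronglyMeasurable (fun z : Fin d → ℝ => ∏ i, (g i : ℝ → ℝ) (z i)) πd := by
    exact Finset.aestronglyMeasurable_fun_prod _ fun i _ =>
      (Lp.aestronglyMeasurable (g i)).comp_quasiMeasurePreserving (qmp_eval i)
  rw [memLp_two_iff_integrable_sq hm]
  have : (fun z : Fin d → ℝ => (∏ i, (g i : ℝ → ℝ) (z i)) ^ 2) =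
      fun z : Fin d → ℝ => ∏ i, ((g i : ℝ → ℝ) (z i)) ^ 2 := by
    funext z; rw [Finset.prod_pow]
  rw [this]
  exact Integrable.fin_pi_prod _ fun i =>
    (memLp_two_iff_integrable_sq (Lp.aestronglyMeasurable (g i))).1 (Lp.memLp (g i))

noncomputable def tensorLp (g : Fin d → Lp ℝ 2 unitMeasure) :
    Lp ℝ 2 (Measure.pi fun _ : Fin d => unitMeasure) :=
  (memℒp_tensor g).toLp _

theorem tensorLp_coeFn (g : Fin d → Lp ℝ 2 unitMeasure) :
    ⇑(tensorLp g) =ᵐ[πd] fun z => ∏ i, (g i : ℝ → ℝ) (z i) :=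
  MemLp.coeFn_toLp _

theorem inner_tensorLp_left (g : Fin d → Lp ℝ 2 unitMeasure)
    (f : Lp ℝ 2 (Measure.pi fun _ : Fin d => unitMeasure)) :
    (inner ℝ (tensorLp g) f : ℝ) = ∫ z, (∏ i, (g i : ℝ → ℝ) (z i)) * f z ∂πd := by
  rw [L2.inner_def]
  refine integral_congr_ae ?_
  filter_upwards [tensorLp_coeFn g] with z hz
  rw [RCLike.inner_apply, conj_trivial, hz, mul_comm]

theorem inner_tensorLp_tensorLp (g h : Fin d → Lp ℝ 2 unitMeasure) :
    (inner ℝ (tensorLp g) (tensorLp h) : ℝ) = ∏ i, (inner ℝ (g i) (h i) : ℝ) := by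
  rw [inner_tensorLp_left]
  have : ∫ z, (∏ i, (g i : ℝ → ℝ) (z i)) * (tensorLp h) z ∂πd =
      ∫ z, ∏ i, ((g i : ℝ → ℝ) (z i) * (h i : ℝ → ℝ) (z i)) ∂πd := by
    refine integral_congr_ae ?_
    filter_upwards [tensorLp_coeFn h] with z hz
    rw [hz, ← Finset.prod_mul_distrib]
  rw [this, integral_fin_pi_prod (fun _ : Fin d => unitMeasure)
    (fun i x => (g i : ℝ → ℝ) x * (h i : ℝ → ℝ) x)]
  refine Finset.prod_congr rfl fun i _ => ?_
  rw [L2.inner_def]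
  refine (integral_congr_ae ?_).symm
  filter_upwards with x
  rw [RCLike.inner_apply, conj_trivial, mul_comm]

theorem norm_tensorLp (g : Fin d → Lp ℝ 2 unitMeasure) :
    ‖tensorLp g‖ = ∏ i, ‖g i‖ := by
  have h2 : ‖tensorLp g‖ ^ 2 = (∏ i, ‖g i‖) ^ 2 := by
    rw [← real_inner_self_eq_norm_sq, inner_tensorLp_tensorLp, ← Finset.prod_pow]
    exact Finset.prod_congr rfl fun i _ => real_inner_self_eq_norm_sq _
  have := congrArg Real.sqrt h2
  rwa [Real.sqrt_sq (norm_nonneg _),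
    Real.sqrt_sq (Finset.prod_nonneg fun i _ => norm_nonneg _)] at this

end RKHSAux

namespace RKHSAux

open Function Set

variable {d : ℕ}

local notation "πd" => Measure.pi fun _ : Fin d => unitMeasure

theorem prod_update_apply (g : Fin d → Lp ℝ 2 unitMeasure) (i : Fin d)
    (b : Lp ℝ 2 unitMeasure) (z : Fin d → ℝ) :
    ∏ j, (update g i b j : ℝ → ℝ) (z j) =
      (b : ℝ → ℝ) (z i) * ∏ j ∈ Finset.univ.erase i, (g j : ℝ → ℝ) (z j) := by
  rw [← Finset.mul_prod_erase Finset.univ _ (Finset.mem_univ i), update_self]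
  congr 1
  refine Finset.prod_congr rfl fun j hj => ?_
  rw [update_of_ne (Finset.ne_of_mem_erase hj)]

theorem tensorLp_update_add (g : Fin d → Lp ℝ 2 unitMeasure) (i : Fin d)
    (h h' : Lp ℝ 2 unitMeasure) :
    tensorLp (update g i (h + h')) = tensorLp (update g i h) + tensorLp (update g i h') := by
  apply Lp.ext (μ := πd)
  filter_upwards [tensorLp_coeFn (update g i (h + h')),
    Lp.coeFn_add (tensorLp (update g i h)) (tensorLp (update g i h')),
    tensorLp_coeFn (update g i h), tensorLp_coeFn (update g i h'),
    Measure.tendsto_eval_ae_ae.eventually (Lp.coeFn_add h h')] with z h1 h2 h3 h4 h5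
  rw [h1, h2, Pi.add_apply, h3, h4, prod_update_apply, prod_update_apply, prod_update_apply,
    h5, Pi.add_apply, add_mul]

theorem tensorLp_update_smul (g : Fin d → Lp ℝ 2 unitMeasure) (i : Fin d)
    (c : ℝ) (h : Lp ℝ 2 unitMeasure) :
    tensorLp (update g i (c • h)) = c • tensorLp (update g i h) := by
  apply Lp.ext (μ := πd)
  filter_upwards [tensorLp_coeFn (update g i (c • h)),
    Lp.coeFn_smul c (tensorLp (update g i h)),
    tensorLp_coeFn (update g i h),
    Measure.tendsto_eval_ae_ae.eventually (Lp.coeFn_smul c h)] with z h1 h2 h3 h5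
  rw [h1, h2, Pi.smul_apply, h3, prod_update_apply, prod_update_apply, h5, Pi.smul_apply,
    smul_eq_mul, smul_eq_mul, mul_assoc]

/-- The tensor product as a continuous linear map in one slot. -/
noncomputable def tensorSlotL (g : Fin d → Lp ℝ 2 unitMeasure) (i : Fin d) :
    Lp ℝ 2 unitMeasure →L[ℝ] Lp ℝ 2 (Measure.pi fun _ : Fin d => unitMeasure) :=
  LinearMap.mkContinuous
    { toFun := fun h => tensorLp (update g i h)
      map_add' := tensorLp_update_add g i
      map_smul' := tensorLp_update_smul g i }
    (∏ j ∈ Finset.univ.erase i, ‖g j‖)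
    (fun h => by
      rw [LinearMap.coe_mk, AddHom.coe_mk, norm_tensorLp,
        ← Finset.mul_prod_erase Finset.univ _ (Finset.mem_univ i), update_self]
      refine le_of_eq ?_
      rw [mul_comm]
      congr 1
      refine Finset.prod_congr rfl fun j hj => ?_
      rw [update_of_ne (Finset.ne_of_mem_erase hj)])

theorem tensorSlotL_apply (g : Fin d → Lp ℝ 2 unitMeasure) (i : Fin d)
    (h : Lp ℝ 2 unitMeasure) : tensorSlotL g i h = tensorLp (update g i h) := rfl

theorem tensor_mem_closure (φ : ℕ → Lp ℝ 2 unitMeasure)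
    (htotal : (Submodule.span ℝ (Set.range φ)).topologicalClosure = ⊤)
    (g : Fin d → Lp ℝ 2 unitMeasure) :
    tensorLp g ∈ (Submodule.span ℝ
      (Set.range fun kv : Fin d → ℕ => tensorLp fun i => φ (kv i))).topologicalClosure := by
  set V := (Submodule.span ℝ
      (Set.range fun kv : Fin d → ℕ => tensorLp fun i => φ (kv i))).topologicalClosure with hV
  suffices H : ∀ s : Finset (Fin d), ∀ g : Fin d → Lp ℝ 2 unitMeasure,
      (∀ i, i ∉ s → ∃ k, g i = φ k) → tensorLp g ∈ V by
    exact H Finset.univ g fun i hi => absurd (Finset.mem_univ i) hi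
  intro s
  induction s using Finset.induction_on with
  | empty =>
      intro g hg
      choose k hk using fun i => hg i (Finset.notMem_empty i)
      have : g = fun i => φ (k i) := funext hk
      rw [this]
      exact Submodule.le_topologicalClosure _ (Submodule.subset_span ⟨k, rfl⟩)
  | insert i s hix ih =>
      intro g hg
      have main : ∀ h : Lp ℝ 2 unitMeasure, tensorLp (update g i h) ∈ V := by
        intro h
        set W := Submodule.comap ((tensorSlotL g i) : Lp ℝ 2 unitMeasure →ₗ[ℝ] _) V with hW
        have hWc : IsClosed (W : Set (Lp ℝ 2 unitMeasure)) :=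
          (Submodule.isClosed_topologicalClosure _).preimage (tensorSlotL g i).continuous
        have hle : Submodule.span ℝ (Set.range φ) ≤ W := by
          rw [Submodule.span_le]
          rintro _ ⟨k, rfl⟩
          show tensorLp (update g i (φ k)) ∈ V
          refine ih _ fun j hj => ?_
          by_cases hji : j = i
          · subst hji; rw [update_self]; exact ⟨k, rfl⟩
          · rw [update_of_ne hji]
            exact hg j (by simp [Finset.mem_insert, hji, hj])
        have : (⊤ : Submodule ℝ (Lp ℝ 2 unitMeasure)) ≤ W := by
          rw [← htotal]
          exact Submodule.topologicalClosure_minimal _ hle hWc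
        exact this (Submodule.mem_top)
      have := main (g i)
      rwa [update_eq_self] at this

end RKHSAux

namespace RKHSAux

open Function Set Filter Topology
open scoped ENNReal
open scoped symmDiff

variable {d : ℕ}

local notation "πd" => Measure.pi fun _ : Fin d => unitMeasure

theorem indicatorConstLp_box (I : Fin d → Set ℝ) (hI : ∀ i, MeasurableSet (I i)) :
    indicatorConstLp 2 (MeasurableSet.univ_pi hI) (measure_ne_top πd _) (1 : ℝ) =
      tensorLp fun i => indicatorConstLp 2 (hI i) (measure_ne_top unitMeasure _) 1 := by
  apply Lp.ext (μ := πd)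
  filter_upwards [indicatorConstLp_coeFn
      (p := 2) (hs := MeasurableSet.univ_pi hI) (hμs := measure_ne_top πd _) (c := (1:ℝ)),
    tensorLp_coeFn fun i => indicatorConstLp 2 (hI i) (measure_ne_top unitMeasure _) (1:ℝ),
    eventually_all.2 fun i : Fin d => Measure.tendsto_eval_ae_ae.eventually
      (indicatorConstLp_coeFn (p := 2) (hs := hI i)
        (hμs := measure_ne_top unitMeasure _) (c := (1:ℝ)))] with z h1 h2 h3
  rw [h1, h2]
  have : ∀ i, (↑↑(indicatorConstLp 2 (hI i) (measure_ne_top unitMeasure _) (1:ℝ)) : ℝ → ℝ) (z i)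
      = (I i).indicator (fun _ => (1:ℝ)) (z i) := h3
  simp_rw [this]
  by_cases hz : z ∈ Set.pi univ I
  · rw [indicator_of_mem hz]
    rw [Finset.prod_congr rfl fun i _ => indicator_of_mem (hz i trivial) _]
    simp
  · rw [indicator_of_notMem hz]
    rw [Set.mem_univ_pi] at hz
    push_neg at hz
    obtain ⟨i, hi⟩ := hz
    exact (Finset.prod_eq_zero (Finset.mem_univ i) (by rw [indicator_of_notMem hi])).symm

theorem indicator_mem_closure (φ : ℕ → Lp ℝ 2 unitMeasure)
    (htotal : (Submodule.span ℝ (Set.range φ)).topologicalClosure = ⊤)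
    (A : Set (Fin d → ℝ)) (hA : MeasurableSet A) :
    indicatorConstLp 2 hA (measure_ne_top πd A) (1 : ℝ) ∈ (Submodule.span ℝ
      (Set.range fun kv : Fin d → ℕ => tensorLp fun i => φ (kv i))).topologicalClosure := by
  set V := (Submodule.span ℝ
      (Set.range fun kv : Fin d → ℕ => tensorLp fun i => φ (kv i))).topologicalClosure with hV
  have hbox : ∀ (I : Fin d → Set ℝ) (hI : ∀ i, MeasurableSet (I i)),
      indicatorConstLp 2 (MeasurableSet.univ_pi hI) (measure_ne_top πd _) (1 : ℝ) ∈ V := by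
    intro I hI
    rw [indicatorConstLp_box I hI]
    exact tensor_mem_closure φ htotal _
  have huniv : indicatorConstLp 2 MeasurableSet.univ (measure_ne_top πd _) (1 : ℝ) ∈ V := by
    have := hbox (fun _ => univ) (fun _ => MeasurableSet.univ)
    convert this using 2 <;> simp [Set.pi_univ]
  have key : ∀ ⦃t : Set (Fin d → ℝ)⦄, MeasurableSet t →
      ∀ (ht : MeasurableSet t), indicatorConstLp 2 ht (measure_ne_top πd t) (1 : ℝ) ∈ V := by
    refine MeasurableSpace.induction_on_inter
      (m := (inferInstance : MeasurableSpace (Fin d → ℝ)))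
      (s := Set.pi univ '' Set.pi univ fun _ : Fin d => {s : Set ℝ | MeasurableSet s})
      generateFrom_pi.symm isPiSystem_pi ?_ ?_ ?_ ?_
    · intro _
      simp only [indicatorConstLp_empty]
      exact zero_mem V
    · rintro t ⟨I, hImem, rfl⟩ ht
      exact hbox I fun i => hImem i trivial
    · intro t htm hC ht
      have : indicatorConstLp 2 ht (measure_ne_top πd tᶜ) (1 : ℝ) =
          indicatorConstLp 2 MeasurableSet.univ (measure_ne_top πd _) (1 : ℝ) -
          indicatorConstLp 2 htm (measure_ne_top πd t) (1 : ℝ) := by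
        apply Lp.ext (μ := πd)
        filter_upwards [indicatorConstLp_coeFn (p := 2) (hs := ht)
            (hμs := measure_ne_top πd tᶜ) (c := (1:ℝ)),
          Lp.coeFn_sub (indicatorConstLp 2 MeasurableSet.univ (measure_ne_top πd _) (1:ℝ))
            (indicatorConstLp 2 htm (measure_ne_top πd t) (1:ℝ)),
          indicatorConstLp_coeFn (p := 2) (hs := (MeasurableSet.univ : MeasurableSet
            (univ : Set (Fin d → ℝ)))) (hμs := measure_ne_top πd _) (c := (1:ℝ)),
          indicatorConstLp_coeFn (p := 2) (hs := htm)
            (hμs := measure_ne_top πd t) (c := (1:ℝ))] with z h1 h2 h3 h4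
        rw [h1, h2, Pi.sub_apply, h3, h4]
        by_cases hz : z ∈ t <;> simp [hz]
      rw [this]
      exact sub_mem huniv (hC htm)
    · intro f hdisj hfm hC
      -- partial unions
      set S : ℕ → Set (Fin d → ℝ) := fun N => ⋃ i ∈ Finset.range N, f i with hS
      have hSm : ∀ N, MeasurableSet (S N) := fun N =>
        (Finset.range N).measurableSet_biUnion fun i _ => hfm i
      have hSV : ∀ N, indicatorConstLp 2 (hSm N) (measure_ne_top πd _) (1 : ℝ) ∈ V := by
        intro N
        induction N with
        | zero =>
            have hS0 : S 0 = ∅ := by simp [hS]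
            have : indicatorConstLp 2 (hSm 0) (measure_ne_top πd _) (1 : ℝ) =
                indicatorConstLp 2 MeasurableSet.empty (measure_ne_top πd ∅) (1 : ℝ) := by
              apply Lp.ext (μ := πd)
              filter_upwards [indicatorConstLp_coeFn (p := 2) (hs := hSm 0)
                  (hμs := measure_ne_top πd _) (c := (1:ℝ)),
                indicatorConstLp_coeFn (p := 2) (hs := MeasurableSet.empty)
                  (hμs := measure_ne_top πd ∅) (c := (1:ℝ))] with z h1 h2
              rw [h1, h2, hS0]
            rw [this, indicatorConstLp_empty]
            exact zero_mem V
        | succ N ihN =>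
            have hSsucc : S (N + 1) = S N ∪ f N := by
              ext x
              simp only [hS, Set.mem_iUnion, Finset.mem_range, Set.mem_union]
              constructor
              · rintro ⟨i, hi, hx⟩
                rcases Nat.lt_succ_iff_lt_or_eq.1 hi with h | h
                · exact Or.inl ⟨i, h, hx⟩
                · subst h; exact Or.inr hx
              · rintro (⟨i, hi, hx⟩ | hx)
                · exact ⟨i, Nat.lt_succ_of_lt hi, hx⟩
                · exact ⟨N, Nat.lt_succ_self N, hx⟩
            have hdisjSN : Disjoint (S N) (f N) := by
              refine Set.disjoint_iUnion_left.2 fun i => ?_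
              refine Set.disjoint_iUnion_left.2 fun hi => ?_
              exact hdisj (Finset.mem_range.1 hi).ne
            have : indicatorConstLp 2 (hSm (N + 1)) (measure_ne_top πd _) (1 : ℝ) =
                indicatorConstLp 2 (hSm N) (measure_ne_top πd _) (1 : ℝ) +
                indicatorConstLp 2 (hfm N) (measure_ne_top πd _) (1 : ℝ) := by
              rw [← indicatorConstLp_disjoint_union (hSm N) (hfm N) (measure_ne_top πd _)
                (measure_ne_top πd _) hdisjSN (1 : ℝ)]
              apply Lp.ext (μ := πd)
              filter_upwards [indicatorConstLp_coeFn (p := 2) (hs := hSm (N+1))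
                  (hμs := measure_ne_top πd _) (c := (1:ℝ)),
                indicatorConstLp_coeFn (p := 2) (hs := (hSm N).union (hfm N))
                  (hμs := measure_union_ne_top (measure_ne_top πd _) (measure_ne_top πd _))
                  (c := (1:ℝ))] with z h1 h2
              rw [h1, h2, hSsucc]
            rw [this]
            exact add_mem ihN (hC N (hfm N))
      -- limit
      intro ht
      have htail : Tendsto (fun N => πd (S N ∆ ⋃ i, f i)) atTop (𝓝 0) := by
        have hsub : ∀ N, S N ∆ (⋃ i, f i) ⊆ ⋃ i, f (i + N) := by
          intro N x hx
          rcases Set.mem_symmDiff.1 hx with ⟨hx1, hx2⟩ | ⟨hx1, hx2⟩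
          · obtain ⟨i, _, hxi⟩ := Set.mem_iUnion₂.1 hx1
            exact absurd (Set.mem_iUnion.2 ⟨i, hxi⟩) hx2
          · obtain ⟨j, hj⟩ := Set.mem_iUnion.1 hx1
            have hjN : N ≤ j := by
              by_contra hlt
              exact hx2 (Set.mem_biUnion (Finset.mem_range.2 (not_le.1 hlt)) hj)
            exact Set.mem_iUnion.2 ⟨j - N, by rwa [Nat.sub_add_cancel hjN]⟩
        have hsum : ∑' i, πd (f i) ≠ ∞ := by
          rw [← measure_iUnion hdisj hfm]
          exact measure_ne_top _ _
        refine tendsto_of_tendsto_of_tendsto_of_le_of_le tendsto_const_nhds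
          (ENNReal.tendsto_sum_nat_add (fun i => πd (f i)) hsum)
          (fun N => zero_le) (fun N => ?_)
        exact le_trans (measure_mono (hsub N)) (measure_iUnion_le _)
      have hlim : Tendsto (fun N => indicatorConstLp 2 (hSm N) (measure_ne_top πd _) (1 : ℝ))
          atTop (𝓝 (indicatorConstLp 2 ht (measure_ne_top πd _) (1 : ℝ))) :=
        tendsto_indicatorConstLp_set (by norm_num) htail
      exact (Submodule.isClosed_topologicalClosure _).mem_of_tendsto hlim
        (Eventually.of_forall hSV)
  exact key hA hA

end RKHSAux

namespace RKHSAux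

open Function Set Filter Topology
open scoped ENNReal

variable {d : ℕ}

local notation "πd" => Measure.pi fun _ : Fin d => unitMeasure

theorem tensor_total (φ : ℕ → Lp ℝ 2 unitMeasure)
    (htotal : (Submodule.span ℝ (Set.range φ)).topologicalClosure = ⊤) :
    (Submodule.span ℝ (Set.range fun kv : Fin d → ℕ =>
      tensorLp fun i => φ (kv i))).topologicalClosure = ⊤ := by
  set V := (Submodule.span ℝ (Set.range fun kv : Fin d → ℕ =>
      tensorLp fun i => φ (kv i))).topologicalClosure with hV
  rw [eq_top_iff]
  intro f _
  refine Lp.induction (p := 2) (by norm_num : (2 : ℝ≥0∞) ≠ ∞) (fun f => f ∈ V) ?_ ?_ ?_ f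
  · intro c s hs hμs
    show ((Lp.simpleFunc.indicatorConst 2 hs hμs.ne c : Lp.simpleFunc ℝ 2 πd) : Lp ℝ 2 πd) ∈ V
    rw [Lp.simpleFunc.coe_indicatorConst]
    have : indicatorConstLp 2 hs hμs.ne c =
        c • indicatorConstLp 2 hs (measure_ne_top πd s) (1 : ℝ) := by
      apply Lp.ext (μ := πd)
      filter_upwards [indicatorConstLp_coeFn (p := 2) (hs := hs) (hμs := hμs.ne) (c := c),
        Lp.coeFn_smul c (indicatorConstLp 2 hs (measure_ne_top πd s) (1 : ℝ)),
        indicatorConstLp_coeFn (p := 2) (hs := hs) (hμs := measure_ne_top πd s)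
          (c := (1:ℝ))] with z h1 h2 h3
      rw [h1, h2, Pi.smul_apply, h3, smul_eq_mul]
      by_cases hz : z ∈ s <;> simp [hz]
    rw [this]
    exact Submodule.smul_mem _ c (indicator_mem_closure φ htotal s hs)
  · intro f g hf hg _ hfV hgV
    exact add_mem hfV hgV
  · exact Submodule.isClosed_topologicalClosure _

theorem tensor_orthonormal (φ : ℕ → Lp ℝ 2 unitMeasure) (hON : Orthonormal ℝ φ) :
    Orthonormal ℝ (fun kv : Fin d → ℕ => tensorLp fun i => φ (kv i)) := by
  rw [orthonormal_iff_ite]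
  intro kv kv'
  rw [inner_tensorLp_tensorLp]
  have hfac : ∀ i, (inner ℝ (φ (kv i)) (φ (kv' i)) : ℝ) =
      if kv i = kv' i then (1 : ℝ) else 0 := fun i => orthonormal_iff_ite.1 hON _ _
  simp_rw [hfac]
  by_cases h : kv = kv'
  · subst h; simp
  · obtain ⟨i, hi⟩ := Function.ne_iff.1 h
    rw [if_neg h]
    exact Finset.prod_eq_zero (Finset.mem_univ i) (if_neg hi)

noncomputable def tensorBasis (φ : ℕ → Lp ℝ 2 unitMeasure) (hON : Orthonormal ℝ φ)
    (htotal : (Submodule.span ℝ (Set.range φ)).topologicalClosure = ⊤) :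
    HilbertBasis (Fin d → ℕ) ℝ (Lp ℝ 2 (Measure.pi fun _ : Fin d => unitMeasure)) :=
  HilbertBasis.mk (tensor_orthonormal φ hON)
    (by rw [tensor_total φ htotal])

set_option maxHeartbeats 1000000 in
theorem parseval (φ : ℕ → Lp ℝ 2 unitMeasure) (hON : Orthonormal ℝ φ)
    (htotal : (Submodule.span ℝ (Set.range φ)).topologicalClosure = ⊤)
    (f : Lp ℝ 2 (Measure.pi fun _ : Fin d => unitMeasure)) :
    ‖f‖ ^ 2 = ∑' kv : Fin d → ℕ, (inner ℝ (tensorLp fun i => φ (kv i)) f : ℝ) ^ 2 := by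
  set b := tensorBasis φ hON htotal with hb
  have hco : ∀ kv : Fin d → ℕ, b.repr f kv = inner ℝ (tensorLp fun i => φ (kv i)) f := by
    intro kv
    rw [hb, HilbertBasis.repr_apply_apply]
    congr 1
    exact congrFun (HilbertBasis.coe_mk _ _) kv
  have hnorm : ‖f‖ = ‖b.repr f‖ := (b.repr.norm_map f).symm
  have h2 := lp.norm_rpow_eq_tsum (p := 2) (by norm_num) (b.repr f)
  have htr : (2 : ℝ≥0∞).toReal = (2 : ℝ) := by norm_num
  rw [htr] at h2
  have e1 : ‖f‖ ^ 2 = ‖b.repr f‖ ^ (2 : ℝ) := by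
    rw [hnorm, show ((2:ℝ)) = ((2:ℕ):ℝ) by norm_num, Real.rpow_natCast]
  have e2 : ∀ kv : Fin d → ℕ, ‖b.repr f kv‖ ^ (2:ℝ) =
      (inner ℝ (tensorLp fun i => φ (kv i)) f : ℝ) ^ 2 := by
    intro kv
    rw [show ((2:ℝ)) = ((2:ℕ):ℝ) by norm_num, Real.rpow_natCast, hco kv]
    rw [Real.norm_eq_abs, sq_abs]
  rw [e1, h2]
  exact tsum_congr e2

end RKHSAux

namespace RKHSAux

theorem tensorCoef_eq_inner {d : ℕ} (φ : ℕ → Lp ℝ 2 unitMeasure)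
    (A : Lp ℝ 2 (Measure.pi fun _ : Fin d => unitMeasure)) (kv : Fin d → ℕ) :
    tensorCoef d φ A kv = (inner ℝ (tensorLp fun i => φ (kv i)) A : ℝ) := by
  rw [inner_tensorLp_left, tensorCoef]
  exact integral_congr_ae (Filter.Eventually.of_forall fun z => mul_comm _ _)

end RKHSAux

/-- **One-sided bias bounds in the tensor-product RKHS.**
In the setting of the tensor RKHS `H(K)^{⊗d}` with `λ_k ≍ k^{−2α}`, let
`B1 = A ×_y P_L` (keeping the coefficients whose second-block indices are all
`< ℓ`) and `B2 = A ×_x P_M ×_y P_L` (keeping those with in addition all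
first-block indices `< m`).  Then
(i) `‖A − B1‖²_{L²} ≤ C d2 ℓ^{−2α} ‖A‖²_{H(K)^{⊗d}}`, and
(ii) `‖B1 − B2‖²_{L²} ≤ C d1 m^{−2α} ‖A‖²_{H(K)^{⊗d}}`. -/
theorem rkhs_projection_bias_one_sided
    (α c1 c2 : ℝ) (hα : 0 < α) (hc1 : 0 < c1) (hc2 : 0 < c2)
    (d1 d2 : ℕ) (hd1 : 0 < d1) (hd2 : 0 < d2) :
    ∃ C : ℝ, 0 < C ∧
      ∀ (lam : ℕ → ℝ)
        (_hlam : ∀ k : ℕ, c1 * ((k : ℝ) + 1) ^ (-(2 * α)) ≤ lam k ∧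
          lam k ≤ c2 * ((k : ℝ) + 1) ^ (-(2 * α)))
        (φ : ℕ → Lp ℝ 2 unitMeasure) (_hON : Orthonormal ℝ φ)
        (_htotal : (Submodule.span ℝ (Set.range φ)).topologicalClosure = ⊤)
        (m ℓ : ℕ) (_hm : 0 < m) (_hℓ : 0 < ℓ)
        (A B1 B2 : Lp ℝ 2 (Measure.pi fun _ : Fin (d1 + d2) => unitMeasure))
        (_hfinite : Summable fun kv : Fin (d1 + d2) → ℕ =>
          (∏ j, lam (kv j))⁻¹ * tensorCoef (d1 + d2) φ A kv ^ 2)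
        (_hB1keep : ∀ kv : Fin (d1 + d2) → ℕ,
          (∀ j : Fin (d1 + d2), d1 ≤ (j : ℕ) → kv j < ℓ) →
          tensorCoef (d1 + d2) φ B1 kv = tensorCoef (d1 + d2) φ A kv)
        (_hB1drop : ∀ kv : Fin (d1 + d2) → ℕ,
          ¬(∀ j : Fin (d1 + d2), d1 ≤ (j : ℕ) → kv j < ℓ) →
          tensorCoef (d1 + d2) φ B1 kv = 0)
        (_hB2keep : ∀ kv : Fin (d1 + d2) → ℕ,
          ((∀ j : Fin (d1 + d2), (j : ℕ) < d1 → kv j < m) ∧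
            (∀ j : Fin (d1 + d2), d1 ≤ (j : ℕ) → kv j < ℓ)) →
          tensorCoef (d1 + d2) φ B2 kv = tensorCoef (d1 + d2) φ A kv)
        (_hB2drop : ∀ kv : Fin (d1 + d2) → ℕ,
          ¬((∀ j : Fin (d1 + d2), (j : ℕ) < d1 → kv j < m) ∧
            (∀ j : Fin (d1 + d2), d1 ≤ (j : ℕ) → kv j < ℓ)) →
          tensorCoef (d1 + d2) φ B2 kv = 0),
        ‖A - B1‖ ^ 2 ≤
            C * (d2 : ℝ) * (ℓ : ℝ) ^ (-(2 * α)) *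
              (∑' kv : Fin (d1 + d2) → ℕ,
                (∏ j, lam (kv j))⁻¹ * tensorCoef (d1 + d2) φ A kv ^ 2) ∧
        ‖B1 - B2‖ ^ 2 ≤
            C * (d1 : ℝ) * (m : ℝ) ^ (-(2 * α)) *
              ∑' kv : Fin (d1 + d2) → ℕ,
                (∏ j, lam (kv j))⁻¹ * tensorCoef (d1 + d2) φ A kv ^ 2 := by
  classical
  refine ⟨c2 * (max 1 c2) ^ (d1 + d2 - 1), by positivity, ?_⟩
  intro lam hlam φ hON htotal m ℓ hm hℓ A B1 B2 hfinite hB1keep hB1drop hB2keep hB2drop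
  set C := c2 * (max 1 c2) ^ (d1 + d2 - 1) with hC
  have hCpos : 0 < C := by positivity
  set coefA := tensorCoef (d1 + d2) φ A with hcoefA
  set coefB1 := tensorCoef (d1 + d2) φ B1 with hcoefB1
  set coefB2 := tensorCoef (d1 + d2) φ B2 with hcoefB2
  set S := ∑' kv : Fin (d1 + d2) → ℕ, (∏ j, lam (kv j))⁻¹ * coefA kv ^ 2 with hSdef
  have hlam_pos : ∀ k, 0 < lam k := fun k =>
    lt_of_lt_of_le (mul_pos hc1 (Real.rpow_pos_of_pos (by positivity) _)) (hlam k).1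
  have hlam_le : ∀ k, lam k ≤ max 1 c2 := by
    intro k
    refine (hlam k).2.trans (le_trans ?_ (le_max_right 1 c2))
    have h1 : ((k : ℝ) + 1) ^ (-(2 * α)) ≤ 1 :=
      Real.rpow_le_one_of_one_le_of_nonpos
        (by linarith [Nat.cast_nonneg (α := ℝ) k])
        (by simp only [neg_nonpos]; linarith)
    calc c2 * ((k : ℝ) + 1) ^ (-(2 * α)) ≤ c2 * 1 :=
          mul_le_mul_of_nonneg_left h1 hc2.le
      _ = c2 := mul_one c2
  have hprod_pos : ∀ kv : Fin (d1 + d2) → ℕ, 0 < ∏ j, lam (kv j) := fun kv =>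
    Finset.prod_pos fun j _ => hlam_pos _
  have hprodbound : ∀ (kv : Fin (d1 + d2) → ℕ) (j0 : Fin (d1 + d2)) (n : ℕ),
      0 < n → n ≤ kv j0 → ∏ j, lam (kv j) ≤ C * (n : ℝ) ^ (-(2 * α)) := by
    intro kv j0 n hn hle
    rw [← Finset.mul_prod_erase Finset.univ _ (Finset.mem_univ j0)]
    have h1 : lam (kv j0) ≤ c2 * (n : ℝ) ^ (-(2 * α)) := by
      refine (hlam _).2.trans ?_
      refine mul_le_mul_of_nonneg_left ?_ hc2.le
      refine Real.rpow_le_rpow_of_nonpos (by exact_mod_cast hn) ?_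
        (by simp only [neg_nonpos]; linarith)
      have : (n : ℝ) ≤ (kv j0 : ℝ) := by exact_mod_cast hle
      linarith
    have h2 : ∏ j ∈ Finset.univ.erase j0, lam (kv j) ≤ (max 1 c2) ^ (d1 + d2 - 1) := by
      calc ∏ j ∈ Finset.univ.erase j0, lam (kv j)
          ≤ ∏ _j ∈ Finset.univ.erase j0, max 1 c2 :=
            Finset.prod_le_prod (fun j _ => (hlam_pos _).le) (fun j _ => hlam_le _)
        _ = (max 1 c2) ^ (d1 + d2 - 1) := by
            rw [Finset.prod_const, Finset.card_erase_of_mem (Finset.mem_univ j0),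
              Finset.card_univ, Fintype.card_fin]
    calc lam (kv j0) * ∏ j ∈ Finset.univ.erase j0, lam (kv j)
        ≤ (c2 * (n : ℝ) ^ (-(2 * α))) * (max 1 c2) ^ (d1 + d2 - 1) := by
          refine mul_le_mul h1 h2 (Finset.prod_nonneg fun j _ => (hlam_pos _).le) (by positivity)
      _ = C * (n : ℝ) ^ (-(2 * α)) := by rw [hC]; ring
  have hterm_nonneg : ∀ kv : Fin (d1 + d2) → ℕ, 0 ≤ (∏ j, lam (kv j))⁻¹ * coefA kv ^ 2 :=
    fun kv => mul_nonneg (inv_nonneg.2 (hprod_pos kv).le) (sq_nonneg _)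
  have hterm : ∀ (kv : Fin (d1 + d2) → ℕ) (j0 : Fin (d1 + d2)) (n : ℕ),
      0 < n → n ≤ kv j0 →
      coefA kv ^ 2 ≤ C * (n : ℝ) ^ (-(2 * α)) * ((∏ j, lam (kv j))⁻¹ * coefA kv ^ 2) := by
    intro kv j0 n hn hle
    have hkey : coefA kv ^ 2 = (∏ j, lam (kv j)) * ((∏ j, lam (kv j))⁻¹ * coefA kv ^ 2) := by
      rw [← mul_assoc, mul_inv_cancel₀ (hprod_pos kv).ne', one_mul]
    calc coefA kv ^ 2 = (∏ j, lam (kv j)) * ((∏ j, lam (kv j))⁻¹ * coefA kv ^ 2) := hkey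
      _ ≤ C * (n : ℝ) ^ (-(2 * α)) * ((∏ j, lam (kv j))⁻¹ * coefA kv ^ 2) :=
          mul_le_mul_of_nonneg_right (hprodbound kv j0 n hn hle) (hterm_nonneg kv)
  -- Parseval identities
  have hP1 : ‖A - B1‖ ^ 2 = ∑' kv : Fin (d1 + d2) → ℕ, (coefA kv - coefB1 kv) ^ 2 := by
    rw [RKHSAux.parseval φ hON htotal (A - B1)]
    refine tsum_congr fun kv => ?_
    rw [inner_sub_right, hcoefA, hcoefB1, RKHSAux.tensorCoef_eq_inner φ A kv,
      RKHSAux.tensorCoef_eq_inner φ B1 kv]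
  have hP2 : ‖B1 - B2‖ ^ 2 = ∑' kv : Fin (d1 + d2) → ℕ, (coefB1 kv - coefB2 kv) ^ 2 := by
    rw [RKHSAux.parseval φ hON htotal (B1 - B2)]
    refine tsum_congr fun kv => ?_
    rw [inner_sub_right, hcoefB1, hcoefB2, RKHSAux.tensorCoef_eq_inner φ B1 kv,
      RKHSAux.tensorCoef_eq_inner φ B2 kv]
  have hSsummable := hfinite
  have hS_nonneg : (0:ℝ) ≤ S := tsum_nonneg hterm_nonneg
  constructor
  · -- part (i)
    have hbound : ∀ kv : Fin (d1 + d2) → ℕ, (coefA kv - coefB1 kv) ^ 2 ≤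
        C * (d2 : ℝ) * (ℓ : ℝ) ^ (-(2 * α)) * ((∏ j, lam (kv j))⁻¹ * coefA kv ^ 2) := by
      intro kv
      by_cases hkeep : ∀ j : Fin (d1 + d2), d1 ≤ (j : ℕ) → kv j < ℓ
      · rw [hB1keep kv hkeep]
        simp only [sub_self, ne_eq]
        rw [zero_pow (by norm_num)]
        exact mul_nonneg (by positivity) (hterm_nonneg kv)
      · rw [hB1drop kv hkeep, sub_zero]
        push_neg at hkeep
        obtain ⟨j0, hj0d, hj0ℓ⟩ := hkeep
        have h := hterm kv j0 ℓ hℓ hj0ℓ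
        refine h.trans ?_
        have h1 : (1:ℝ) ≤ (d2 : ℝ) := by exact_mod_cast hd2
        have hx : (0:ℝ) ≤ C * (ℓ : ℝ) ^ (-(2 * α)) * ((∏ j, lam (kv j))⁻¹ * coefA kv ^ 2) :=
          mul_nonneg (by positivity) (hterm_nonneg kv)
        calc C * (ℓ : ℝ) ^ (-(2 * α)) * ((∏ j, lam (kv j))⁻¹ * coefA kv ^ 2)
            ≤ C * (ℓ : ℝ) ^ (-(2 * α)) * ((∏ j, lam (kv j))⁻¹ * coefA kv ^ 2) * (d2 : ℝ) :=
              le_mul_of_one_le_right hx h1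
          _ = C * (d2 : ℝ) * (ℓ : ℝ) ^ (-(2 * α)) * ((∏ j, lam (kv j))⁻¹ * coefA kv ^ 2) := by
              ring
    rw [hP1]
    have hGsum : Summable fun kv : Fin (d1 + d2) → ℕ =>
        C * (d2 : ℝ) * (ℓ : ℝ) ^ (-(2 * α)) * ((∏ j, lam (kv j))⁻¹ * coefA kv ^ 2) :=
      hSsummable.mul_left _
    have hFsum : Summable fun kv : Fin (d1 + d2) → ℕ => (coefA kv - coefB1 kv) ^ 2 :=
      Summable.of_nonneg_of_le (fun kv => sq_nonneg _) hbound hGsum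
    calc ∑' kv : Fin (d1 + d2) → ℕ, (coefA kv - coefB1 kv) ^ 2
        ≤ ∑' kv : Fin (d1 + d2) → ℕ,
            C * (d2 : ℝ) * (ℓ : ℝ) ^ (-(2 * α)) * ((∏ j, lam (kv j))⁻¹ * coefA kv ^ 2) :=
          Summable.tsum_le_tsum hbound hFsum hGsum
      _ = C * (d2 : ℝ) * (ℓ : ℝ) ^ (-(2 * α)) * S := tsum_mul_left
  · -- part (ii)
    have hbound : ∀ kv : Fin (d1 + d2) → ℕ, (coefB1 kv - coefB2 kv) ^ 2 ≤
        C * (d1 : ℝ) * (m : ℝ) ^ (-(2 * α)) * ((∏ j, lam (kv j))⁻¹ * coefA kv ^ 2) := by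
      intro kv
      by_cases hy : ∀ j : Fin (d1 + d2), d1 ≤ (j : ℕ) → kv j < ℓ
      · by_cases hx : ∀ j : Fin (d1 + d2), (j : ℕ) < d1 → kv j < m
        · rw [hB1keep kv hy, hB2keep kv ⟨hx, hy⟩]
          simp only [sub_self]
          rw [zero_pow (by norm_num)]
          exact mul_nonneg (by positivity) (hterm_nonneg kv)
        · rw [hB1keep kv hy, hB2drop kv (fun h => hx h.1), sub_zero]
          push_neg at hx
          obtain ⟨j0, hj0d, hj0m⟩ := hx
          have h := hterm kv j0 m hm hj0m
          refine h.trans ?_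
          have h1 : (1:ℝ) ≤ (d1 : ℝ) := by exact_mod_cast hd1
          have hx : (0:ℝ) ≤ C * (m : ℝ) ^ (-(2 * α)) * ((∏ j, lam (kv j))⁻¹ * coefA kv ^ 2) :=
            mul_nonneg (by positivity) (hterm_nonneg kv)
          calc C * (m : ℝ) ^ (-(2 * α)) * ((∏ j, lam (kv j))⁻¹ * coefA kv ^ 2)
              ≤ C * (m : ℝ) ^ (-(2 * α)) * ((∏ j, lam (kv j))⁻¹ * coefA kv ^ 2) * (d1 : ℝ) :=
                le_mul_of_one_le_right hx h1
            _ = C * (d1 : ℝ) * (m : ℝ) ^ (-(2 * α)) * ((∏ j, lam (kv j))⁻¹ * coefA kv ^ 2) := by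
                ring
      · rw [hB1drop kv hy, hB2drop kv (fun h => hy h.2), sub_zero]
        rw [zero_pow (by norm_num)]
        exact mul_nonneg (by positivity) (hterm_nonneg kv)
    rw [hP2]
    have hGsum : Summable fun kv : Fin (d1 + d2) → ℕ =>
        C * (d1 : ℝ) * (m : ℝ) ^ (-(2 * α)) * ((∏ j, lam (kv j))⁻¹ * coefA kv ^ 2) :=
      hSsummable.mul_left _
    have hFsum : Summable fun kv : Fin (d1 + d2) → ℕ => (coefB1 kv - coefB2 kv) ^ 2 :=
      Summable.of_nonneg_of_le (fun kv => sq_nonneg _) hbound hGsum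
    calc ∑' kv : Fin (d1 + d2) → ℕ, (coefB1 kv - coefB2 kv) ^ 2
        ≤ ∑' kv : Fin (d1 + d2) → ℕ,
            C * (d1 : ℝ) * (m : ℝ) ^ (-(2 * α)) * ((∏ j, lam (kv j))⁻¹ * coefA kv ^ 2) :=
          Summable.tsum_le_tsum hbound hFsum hGsum
      _ = C * (d1 : ℝ) * (m : ℝ) ^ (-(2 * α)) * S := tsum_mul_left
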